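/- For every s₁ ∈ U there exist an open neighborhood V ⊆ U of s₁, a holomorphic function f : V → ℂ not identically zero with S ∩ V = f⁻¹(0), and analytic families of bounded operators H : V → L(F, E) and R : V → L(F, E) such that R(s) has finite rank for every s ∈ V, and such that for every s ∈ V with f(s) ≠ 0 the operator H(s) + f(s)⁻¹·R(s) is a two-sided inverse of P(s); in other words, s ↦ P(s)⁻¹ is locally the sum of a holomorphic operator family and a finite-rank operator family divided by a holomorphic scalar function. -/

import Mathlib

open ContinuousLinearMap Set Module

namespace AFT2
set_option linter.unusedSectionVars false
set_option maxHeartbeats 1000000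

variable {X Y W : Type*}
  [NormedAddCommGroup X] [NormedSpace ℂ X] [CompleteSpace X]
  [NormedAddCommGroup Y] [NormedSpace ℂ Y] [CompleteSpace Y]
  [NormedAddCommGroup W] [NormedSpace ℂ W] [CompleteSpace W]
  {n : ℕ}

lemma clm_comp_analytic {V : Set (Fin n → ℂ)} {f : (Fin n → ℂ) → (X →L[ℂ] Y)}
    {g : (Fin n → ℂ) → (W →L[ℂ] X)} (hf : AnalyticOnNhd ℂ f V) (hg : AnalyticOnNhd ℂ g V) :
    AnalyticOnNhd ℂ (fun s => (f s).comp (g s)) V := by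
  intro x hx
  have h1 : AnalyticAt ℂ (fun p : (X →L[ℂ] Y) × (W →L[ℂ] X) => p.1.comp p.2) (f x, g x) :=
    (ContinuousLinearMap.compL ℂ W X Y).analyticAt_bilinear (f x, g x)
  exact AnalyticAt.comp (g := fun p : (X →L[ℂ] Y) × (W →L[ℂ] X) => p.1.comp p.2)
    (f := fun s => (f s, g s)) h1 ((hf x hx).prod (hg x hx))

lemma clm_apply_analytic {V : Set (Fin n → ℂ)} {f : (Fin n → ℂ) → (X →L[ℂ] Y)}
    {g : (Fin n → ℂ) → X} (hf : AnalyticOnNhd ℂ f V) (hg : AnalyticOnNhd ℂ g V) :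
    AnalyticOnNhd ℂ (fun s => (f s) (g s)) V := by
  intro x hx
  have h1 : AnalyticAt ℂ (fun p : (X →L[ℂ] Y) × X => p.1 p.2) (f x, g x) :=
    ((ContinuousLinearMap.apply ℂ Y).flip).analyticAt_bilinear (f x, g x)
  exact AnalyticAt.comp (g := fun p : (X →L[ℂ] Y) × X => p.1 p.2)
    (f := fun s => (f s, g s)) h1 ((hf x hx).prod (hg x hx))

/-- An analytic family of operators, bijective at a point, admits an analytic
two-sided inverse family on a connected open neighborhood. -/
lemma exists_inverse_family {Ω : Set (Fin n → ℂ)} (hΩ : IsOpen Ω)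
    {T : (Fin n → ℂ) → (X →L[ℂ] Y)} (hT : AnalyticOnNhd ℂ T Ω) {s₁ : Fin n → ℂ}
    (hs₁ : s₁ ∈ Ω) (hbij : Function.Bijective (T s₁)) :
    ∃ (V : Set (Fin n → ℂ)) (Tinv : (Fin n → ℂ) → (Y →L[ℂ] X)),
      IsOpen V ∧ s₁ ∈ V ∧ V ⊆ Ω ∧ IsPreconnected V ∧ AnalyticOnNhd ℂ Tinv V ∧
      ∀ s ∈ V, (∀ y, T s (Tinv s y) = y) ∧ (∀ x, Tinv s (T s x) = x) := by
  set e₀ : X ≃L[ℂ] Y := ContinuousLinearEquiv.ofBijective (T s₁)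
    (LinearMap.ker_eq_bot_of_injective hbij.1) (LinearMap.range_eq_top.2 hbij.2) with he₀
  have he₀app : ∀ x, e₀ x = T s₁ x := fun x => rfl
  set u : Y →L[ℂ] X := (e₀.symm : Y →L[ℂ] X) with hu
  set G : (Fin n → ℂ) → (X →L[ℂ] X) := fun s => u.comp (T s) with hG
  have hGan : AnalyticOnNhd ℂ G Ω := clm_comp_analytic (fun x _ => analyticAt_const) hT
  have hG1 : G s₁ = 1 := by
    ext x
    show e₀.symm (T s₁ x) = x
    rw [← he₀app, e₀.symm_apply_apply]
  -- open set where G is a unit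
  have hGc : ContinuousAt G s₁ := (hGan s₁ hs₁).continuousAt
  have hmem : {g : X →L[ℂ] X | IsUnit g} ∈ nhds (G s₁) := by
    apply Units.isOpen.mem_nhds
    rw [hG1]; exact isUnit_one
  have hnb : Ω ∩ G ⁻¹' {g : X →L[ℂ] X | IsUnit g} ∈ nhds s₁ :=
    Filter.inter_mem (hΩ.mem_nhds hs₁) (hGc.preimage_mem_nhds hmem)
  obtain ⟨ε, hε, hball⟩ := Metric.mem_nhds_iff.1 hnb
  refine ⟨Metric.ball s₁ ε, fun s => (Ring.inverse (G s)).comp u, Metric.isOpen_ball,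
    Metric.mem_ball_self hε, fun x hx => (hball hx).1, (convex_ball s₁ ε).isPreconnected,
    ?_, ?_⟩
  · -- analyticity
    have h1 : AnalyticOnNhd ℂ (fun s => Ring.inverse (G s)) (Metric.ball s₁ ε) := by
      intro x hx
      have hxu : IsUnit (G x) := (hball hx).2
      exact AnalyticAt.comp (g := Ring.inverse) (f := G)
        (analyticAt_inverse (𝕜 := ℂ) hxu.unit) (hGan x (hball hx).1)
    exact clm_comp_analytic h1 (fun x _ => analyticAt_const)
  · intro s hs
    have hsu : IsUnit (G s) := (hball hs).2
    have hinv : Ring.inverse (G s) = ↑hsu.unit⁻¹ := by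
      conv_lhs => rw [← hsu.unit_spec]
      exact Ring.inverse_unit hsu.unit
    have hTe : ∀ x, T s x = e₀ (G s x) := by
      intro x
      show T s x = e₀ (e₀.symm (T s x))
      rw [e₀.apply_symm_apply]
    constructor
    · intro y
      show T s ((Ring.inverse (G s)) (u y)) = y
      rw [hTe, hinv]
      have : G s ((↑hsu.unit⁻¹ : X →L[ℂ] X) (u y)) = u y := by
        have h3 : ((hsu.unit : X →L[ℂ] X) * ↑hsu.unit⁻¹) (u y) = u y := by
          rw [hsu.unit.mul_inv]; rfl
        rw [ContinuousLinearMap.mul_apply, hsu.unit_spec] at h3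
        exact h3
      rw [this]
      show e₀ (e₀.symm y) = y
      exact e₀.apply_symm_apply y
    · intro x
      show (Ring.inverse (G s)) (u (T s x)) = x
      have hux : u (T s x) = G s x := rfl
      rw [hux, hinv]
      have h3 : ((↑hsu.unit⁻¹ : X →L[ℂ] X) * (hsu.unit : X →L[ℂ] X)) x = x := by
        rw [hsu.unit.inv_mul]; rfl
      rw [ContinuousLinearMap.mul_apply, hsu.unit_spec] at h3
      exact h3




lemma det_analytic {Mat : (Fin n → ℂ) → Matrix (Fin m) (Fin m) ℂ}
    (h : ∀ i j, AnalyticOnNhd ℂ (fun s => Mat s i j) V) :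
    AnalyticOnNhd ℂ (fun s => (Mat s).det) V := by
  have heq : (fun s => (Mat s).det) = fun s => ∑ σ : Equiv.Perm (Fin m),
      (Equiv.Perm.sign σ : ℂ) * ∏ i, Mat s (σ i) i := by
    funext s; rw [Matrix.det_apply']
  rw [heq]
  apply Finset.analyticOnNhd_fun_sum
  intro σ _
  exact analyticOnNhd_const.mul (Finset.analyticOnNhd_fun_prod _ (fun i _ => h (σ i) i))

lemma adjugate_analytic {Mat : (Fin n → ℂ) → Matrix (Fin m) (Fin m) ℂ}
    (h : ∀ i j, AnalyticOnNhd ℂ (fun s => Mat s i j) V) (i j : Fin m) :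
    AnalyticOnNhd ℂ (fun s => (Mat s).adjugate i j) V := by
  have heq : (fun s => (Mat s).adjugate i j)
      = fun s => ((Mat s).updateRow j (Pi.single i 1)).det := by
    funext s; rw [Matrix.adjugate_apply]
  rw [heq]
  apply det_analytic
  intro k l
  by_cases hk : k = j
  · subst hk
    simp only [Matrix.updateRow_self]
    exact analyticOnNhd_const
  · simp only [Matrix.updateRow_apply, if_neg hk]
    exact h k l

variable {N : Type*} [NormedAddCommGroup N] [NormedSpace ℂ N] [FiniteDimensional ℂ N]

/-- family of CLMs from a family of matrices with analytic entries -/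
lemma toCLM_analytic (b : Basis (Fin m) ℂ N) {Mat : (Fin n → ℂ) → Matrix (Fin m) (Fin m) ℂ}
    (h : ∀ i j, AnalyticOnNhd ℂ (fun s => Mat s i j) V) :
    AnalyticOnNhd ℂ
      (fun s => LinearMap.toContinuousLinearMap (Matrix.toLin b b (Mat s))) V := by
  set Φ : Matrix (Fin m) (Fin m) ℂ →ₗ[ℂ] (N →L[ℂ] N) :=
    ((Matrix.toLin b b).trans LinearMap.toContinuousLinearMap).toLinearMap with hΦ
  have heq : (fun s => LinearMap.toContinuousLinearMap (Matrix.toLin b b (Mat s)))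
      = fun s => ∑ i : Fin m, ∑ j : Fin m, Mat s i j • Φ (Matrix.single i j 1) := by
    funext s
    have h1 : Mat s = ∑ i : Fin m, ∑ j : Fin m, Matrix.single i j (Mat s i j) :=
      Matrix.matrix_eq_sum_single (Mat s)
    have h2 : Φ (Mat s) = ∑ i : Fin m, ∑ j : Fin m, Mat s i j • Φ (Matrix.single i j 1) := by
      conv_lhs => rw [h1]
      rw [map_sum]
      congr 1; funext i
      rw [map_sum]
      congr 1; funext j
      rw [← Φ.map_smul]
      congr 1
      rw [Matrix.smul_single, smul_eq_mul, mul_one]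
    exact h2
  rw [heq]
  apply Finset.analyticOnNhd_fun_sum
  intro i _
  apply Finset.analyticOnNhd_fun_sum
  intro j _
  exact (h i j).smul analyticOnNhd_const


theorem local_struct {E F : Type*}
    [NormedAddCommGroup E] [NormedSpace ℂ E] [CompleteSpace E]
    [NormedAddCommGroup F] [NormedSpace ℂ F] [CompleteSpace F]
    {U : Set (Fin n → ℂ)} (hUopen : IsOpen U)
    {P : (Fin n → ℂ) → (E →L[ℂ] F)} (hP : AnalyticOnNhd ℂ P U)
    {s₁ : Fin n → ℂ} (hs₁ : s₁ ∈ U)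
    (hker : FiniteDimensional ℂ (LinearMap.ker (P s₁ : E →ₗ[ℂ] F)))
    (hcoker : FiniteDimensional ℂ (F ⧸ LinearMap.range (P s₁ : E →ₗ[ℂ] F))) :
    ∃ V : Set (Fin n → ℂ), IsOpen V ∧ s₁ ∈ V ∧ V ⊆ U ∧ IsPreconnected V ∧
      ∃ (f : (Fin n → ℂ) → ℂ) (H R : (Fin n → ℂ) → (F →L[ℂ] E)),
        AnalyticOnNhd ℂ f V ∧ AnalyticOnNhd ℂ H V ∧ AnalyticOnNhd ℂ R V ∧
        (∀ s ∈ V, FiniteDimensional ℂ (LinearMap.range (R s : F →ₗ[ℂ] E))) ∧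
        (∀ s ∈ V, (Function.Bijective (P s) ↔ f s ≠ 0)) ∧
        (∀ s ∈ V, f s ≠ 0 →
          (P s).comp (H s + (f s)⁻¹ • R s) = ContinuousLinearMap.id ℂ F ∧
          (H s + (f s)⁻¹ • R s).comp (P s) = ContinuousLinearMap.id ℂ E) := by
  classical
  set N := LinearMap.ker (P s₁ : E →ₗ[ℂ] F) with hN
  obtain ⟨π, hπ⟩ := Submodule.ClosedComplemented.of_finiteDimensional N
  obtain ⟨F₁, hcompl⟩ := Submodule.exists_isCompl (LinearMap.range (P s₁ : E →ₗ[ℂ] F))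
  haveI hF₁fin : FiniteDimensional ℂ F₁ :=
    (Submodule.quotientEquivOfIsCompl _ _ hcompl).finiteDimensional
  set T : (Fin n → ℂ) → (E × F₁) →L[ℂ] (F × N) := fun s =>
    (ContinuousLinearMap.inl ℂ F N).comp ((P s).comp (ContinuousLinearMap.fst ℂ E F₁)
        + F₁.subtypeL.comp (ContinuousLinearMap.snd ℂ E F₁))
      + (ContinuousLinearMap.inr ℂ F N).comp (π.comp (ContinuousLinearMap.fst ℂ E F₁)) with hTdef
  have hTapp : ∀ s (x : E) (y : F₁), T s (x, y) = (P s x + ↑y, π x) := by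
    intro s x y
    simp [hTdef, Prod.ext_iff]
  have hTan : AnalyticOnNhd ℂ T U := by
    apply AnalyticOnNhd.add
    · apply clm_comp_analytic (fun x _ => analyticAt_const)
      exact AnalyticOnNhd.add (clm_comp_analytic hP (fun x _ => analyticAt_const))
        (fun x _ => analyticAt_const)
    · exact fun x _ => analyticAt_const
  -- bijectivity of T s₁
  have hTbij : Function.Bijective (T s₁) := by
    constructor
    · have hinj0 : ∀ (x : E) (y : F₁), T s₁ (x, y) = 0 → x = 0 ∧ y = 0 := by
        intro x y h0
        rw [hTapp, Prod.ext_iff] at h0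
        simp only [Prod.fst_zero, Prod.snd_zero] at h0
        obtain ⟨h1, h2⟩ := h0
        have hPx : P s₁ x = 0 := by
          have hmem : P s₁ x ∈ (LinearMap.range (P s₁ : E →ₗ[ℂ] F)) ⊓ F₁ := by
            constructor
            · exact LinearMap.mem_range_self _ x
            · have hxy : P s₁ x = -↑y := eq_neg_of_add_eq_zero_left h1
              rw [hxy]
              exact neg_mem y.2
          rw [hcompl.inf_eq_bot] at hmem
          exact hmem
        have hy : (y : F) = 0 := by rw [hPx, zero_add] at h1; exact h1
        have hxN : x ∈ N := LinearMap.mem_ker.2 hPx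
        have hπx : π x = ⟨x, hxN⟩ := hπ ⟨x, hxN⟩
        have hx0 : x = 0 := by
          have h3 := hπx.symm.trans h2
          exact congrArg Subtype.val h3
        exact ⟨hx0, Subtype.ext hy⟩
      intro p q hpq
      have h0 : T s₁ ((p - q).1, (p - q).2) = 0 := by
        rw [Prod.mk.eta, map_sub, hpq, sub_self]
      obtain ⟨hx, hy⟩ := hinj0 _ _ h0
      have hpq0 : p - q = 0 := Prod.ext hx hy
      exact sub_eq_zero.1 hpq0
    · rintro ⟨z, w⟩
      have hz : z ∈ (LinearMap.range (P s₁ : E →ₗ[ℂ] F)) ⊔ F₁ := by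
        rw [hcompl.sup_eq_top]; trivial
      obtain ⟨r, hr, c, hc, hrc⟩ := Submodule.mem_sup.1 hz
      obtain ⟨x₀, hx₀⟩ := hr
      refine ⟨(x₀ - ↑(π x₀) + ↑w, ⟨c, hc⟩), ?_⟩
      rw [hTapp, Prod.ext_iff]
      constructor
      · have hπx₀ : P s₁ ↑(π x₀) = 0 := (π x₀).2
        have hw : P s₁ ↑w = 0 := w.2
        simp only [map_add, map_sub, hπx₀, hw, sub_zero, add_zero, hx₀]
        rw [← hx₀] at hrc; exact hrc
      · have h1 : π ↑(π x₀) = π x₀ := hπ (π x₀)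
        have h2 : π ↑w = w := hπ w
        simp only [map_add, map_sub, h1, h2, sub_self, zero_add]
  obtain ⟨V, Tinv, hVopen, hs₁V, hVU, hVconn, hTinvan, hTinv⟩ :=
    exists_inverse_family hUopen hTan hs₁ hTbij
  -- blocks
  set A : (Fin n → ℂ) → (F →L[ℂ] E) := fun s =>
    (ContinuousLinearMap.fst ℂ E F₁).comp ((Tinv s).comp (ContinuousLinearMap.inl ℂ F N)) with hAdef
  set B : (Fin n → ℂ) → (N →L[ℂ] E) := fun s =>
    (ContinuousLinearMap.fst ℂ E F₁).comp ((Tinv s).comp (ContinuousLinearMap.inr ℂ F N)) with hBdef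
  set C : (Fin n → ℂ) → (F →L[ℂ] F₁) := fun s =>
    (ContinuousLinearMap.snd ℂ E F₁).comp ((Tinv s).comp (ContinuousLinearMap.inl ℂ F N)) with hCdef
  set D : (Fin n → ℂ) → (N →L[ℂ] F₁) := fun s =>
    (ContinuousLinearMap.snd ℂ E F₁).comp ((Tinv s).comp (ContinuousLinearMap.inr ℂ F N)) with hDdef
  have hTinv12 : ∀ s, ∀ (z : F) (w : N), Tinv s (z, w) = (A s z + B s w, C s z + D s w) := by
    intro s z w
    have hzw : ((z, w) : F × N) = (z, 0) + (0, w) := by simp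
    rw [hzw, map_add]
    rfl
  have hAan : AnalyticOnNhd ℂ A V :=
    clm_comp_analytic (fun x _ => analyticAt_const)
      (clm_comp_analytic hTinvan (fun x _ => analyticAt_const))
  have hBan : AnalyticOnNhd ℂ B V :=
    clm_comp_analytic (fun x _ => analyticAt_const)
      (clm_comp_analytic hTinvan (fun x _ => analyticAt_const))
  have hCan : AnalyticOnNhd ℂ C V :=
    clm_comp_analytic (fun x _ => analyticAt_const)
      (clm_comp_analytic hTinvan (fun x _ => analyticAt_const))
  have hDan : AnalyticOnNhd ℂ D V :=
    clm_comp_analytic (fun x _ => analyticAt_const)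
      (clm_comp_analytic hTinvan (fun x _ => analyticAt_const))
  -- bijectivity of P s implies bijectivity of D s on V
  have key1 : ∀ s ∈ V, Function.Bijective (P s) → Function.Bijective (D s) := by
    intro s hs hPb
    constructor
    · intro w₁ w₂ hw
      have hDw : D s (w₁ - w₂) = 0 := by rw [map_sub, hw, sub_self]
      set w := w₁ - w₂ with hwdef
      have h2 : Tinv s ((0 : F), w) = (B s w, D s w) := by
        rw [hTinv12 s 0 w, map_zero, map_zero, zero_add, zero_add]
      have h1 := (hTinv s hs).1 (0, w)
      rw [h2, hDw, hTapp, Prod.ext_iff] at h1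
      have h1a : P s (B s w) + ↑(0 : F₁) = 0 := h1.1
      have h1b : π (B s w) = w := h1.2
      have hB0 : B s w = 0 := by
        apply hPb.1
        rw [map_zero]
        simpa using h1a
      have hw0 : w = 0 := by rw [← h1b, hB0, map_zero]
      exact sub_eq_zero.1 hw0
    · intro y
      obtain ⟨x, hx⟩ := hPb.2 ↑y
      have hT0 : T s (x, -y) = (0, π x) := by
        rw [hTapp, Prod.ext_iff]
        constructor
        · show P s x + ↑(-y) = 0
          rw [hx]
          simp
        · rfl
      have h3 := (hTinv s hs).2 (x, -y)
      rw [hT0, hTinv12 s 0 (π x), map_zero, map_zero, zero_add, zero_add] at h3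
      rw [Prod.ext_iff] at h3
      have h4 : D s (π x) = -y := h3.2
      refine ⟨-(π x), ?_⟩
      rw [map_neg, h4, neg_neg]
  by_cases hdim : finrank ℂ F₁ = finrank ℂ N
  case neg =>
    refine ⟨V, hVopen, hs₁V, hVU, hVconn, (fun _ => (0 : ℂ)), (fun _ => 0), (fun _ => 0),
      analyticOnNhd_const, analyticOnNhd_const, analyticOnNhd_const, ?_, ?_, ?_⟩
    · intro s hs
      have h0 : LinearMap.range ((fun _ => (0 : F →L[ℂ] E)) s : F →ₗ[ℂ] E) = ⊥ := by
        ext v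
        simp only [LinearMap.mem_range, Submodule.mem_bot]
        constructor
        · rintro ⟨u, rfl⟩; rfl
        · rintro rfl; exact ⟨0, rfl⟩
      rw [h0]
      infer_instance
    · intro s hs
      constructor
      · intro hPb
        exfalso
        have hDb := key1 s hs hPb
        have hDb' : Function.Bijective ((D s : ↥N →ₗ[ℂ] ↥F₁) : ↥N → ↥F₁) := hDb
        have hfr : finrank ℂ ↥N = finrank ℂ ↥F₁ :=
          LinearEquiv.finrank_eq (LinearEquiv.ofBijective _ hDb')
        exact hdim hfr.symm
      · intro h; exact absurd rfl h
    · intro s hs h; exact absurd rfl h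
  case pos =>
    obtain ⟨eNF⟩ := FiniteDimensional.nonempty_linearEquiv_of_finrank_eq hdim
    set e : ↥F₁ ≃L[ℂ] ↥N := eNF.toContinuousLinearEquiv with hedef
    set b : Basis (Fin (finrank ℂ ↥N)) ℂ ↥N := finBasis ℂ ↥N with hbdef
    set M : (Fin n → ℂ) → (↥N →L[ℂ] ↥N) := fun s => ((e : ↥F₁ →L[ℂ] ↥N)).comp (D s) with hMdef
    set Mat : (Fin n → ℂ) → Matrix (Fin (finrank ℂ ↥N)) (Fin (finrank ℂ ↥N)) ℂ :=
      fun s => LinearMap.toMatrix b b (M s : ↥N →ₗ[ℂ] ↥N) with hMatdef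
    set f : (Fin n → ℂ) → ℂ := fun s => (Mat s).det with hfdef
    set adjC : (Fin n → ℂ) → (↥N →L[ℂ] ↥N) :=
      fun s => LinearMap.toContinuousLinearMap (Matrix.toLin b b ((Mat s).adjugate)) with hadjdef
    set R : (Fin n → ℂ) → (F →L[ℂ] E) :=
      fun s => -((B s).comp ((adjC s).comp (((e : ↥F₁ →L[ℂ] ↥N)).comp (C s)))) with hRdef
    -- analyticity
    have hMan : AnalyticOnNhd ℂ M V := clm_comp_analytic (fun x _ => analyticAt_const) hDan
    have hent : ∀ i j, AnalyticOnNhd ℂ (fun s => Mat s i j) V := by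
      intro i j
      have hφ : (fun s => Mat s i j)
          = fun s => (LinearMap.toContinuousLinearMap (b.coord i)) (M s (b j)) := by
        funext s
        simp [hMatdef, LinearMap.toMatrix_apply, Basis.coord_apply]
      rw [hφ]
      exact clm_apply_analytic (fun x _ => analyticAt_const)
        (clm_apply_analytic hMan (fun x _ => analyticAt_const))
    have hfan : AnalyticOnNhd ℂ f V := det_analytic hent
    have hadjan : AnalyticOnNhd ℂ adjC V := toCLM_analytic b (fun i j => adjugate_analytic hent i j)
    have hRan : AnalyticOnNhd ℂ R V := by
      apply AnalyticOnNhd.neg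
      exact clm_comp_analytic hBan (clm_comp_analytic hadjan
        (clm_comp_analytic (fun x _ => analyticAt_const) hCan))
    -- adjugate identities
    have hMCLM : ∀ s, (M s : ↥N →ₗ[ℂ] ↥N) = Matrix.toLin b b (Mat s) :=
      fun s => (Matrix.toLin_toMatrix b b _).symm
    have hMadj : ∀ s (x : ↥N), M s (adjC s x) = f s • x := by
      intro s x
      have h1 : M s (adjC s x) = Matrix.toLin b b (Mat s) (Matrix.toLin b b ((Mat s).adjugate) x) := by
        conv_lhs => rw [show M s (adjC s x) = (M s : ↥N →ₗ[ℂ] ↥N) (adjC s x) from rfl, hMCLM s]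
        rfl
      rw [h1, ← Matrix.toLin_mul_apply, Matrix.mul_adjugate, map_smul, Matrix.toLin_one]
      rfl
    have hadjM : ∀ s (x : ↥N), adjC s (M s x) = f s • x := by
      intro s x
      have h1 : adjC s (M s x) = Matrix.toLin b b ((Mat s).adjugate) (Matrix.toLin b b (Mat s) x) := by
        conv_lhs => rw [show adjC s (M s x) = adjC s ((M s : ↥N →ₗ[ℂ] ↥N) x) from rfl, hMCLM s]
        rfl
      rw [h1, ← Matrix.toLin_mul_apply, Matrix.adjugate_mul, map_smul, Matrix.toLin_one]
      rfl
    -- the inverse identities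
    have hgoal : ∀ s ∈ V, f s ≠ 0 →
        (∀ z, P s ((A s + (f s)⁻¹ • R s) z) = z) ∧ (∀ x, (A s + (f s)⁻¹ • R s) (P s x) = x) := by
      intro s hs hf
      constructor
      · intro z
        set w : ↥N := -((f s)⁻¹ • adjC s (e (C s z))) with hwdef
        have hq : R s z = -(B s (adjC s (e (C s z)))) := by
          rw [hRdef]
          simp only [ContinuousLinearMap.neg_apply, ContinuousLinearMap.coe_comp',
            Function.comp_apply, ContinuousLinearEquiv.coe_coe]
        have hBw : B s w = (f s)⁻¹ • R s z := by
          rw [hq, hwdef, map_neg, map_smul, smul_neg]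
        have hgz : (A s + (f s)⁻¹ • R s) z = A s z + B s w := by
          rw [ContinuousLinearMap.add_apply, ContinuousLinearMap.smul_apply, hBw]
        have hCD : C s z + D s w = 0 := by
          apply e.injective
          rw [map_add, map_zero]
          have h2 : e (D s w) = M s w := rfl
          rw [h2, hwdef, map_neg, map_smul]
          have h3 : M s (adjC s (e (C s z))) = f s • e (C s z) := hMadj s _
          rw [h3, smul_smul, inv_mul_cancel₀ hf, one_smul]
          exact add_neg_cancel _
        have h5 := (hTinv s hs).1 (z, w)
        rw [hTinv12 s z w, hCD, hTapp] at h5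
        have h6 : P s (A s z + B s w) + ↑(0 : ↥F₁) = z := congrArg Prod.fst h5
        rw [hgz]
        simpa using h6
      · intro x
        have h3 := (hTinv s hs).2 (x, 0)
        have h4 : T s (x, 0) = (P s x, π x) := by rw [hTapp]; simp
        rw [h4, hTinv12 s (P s x) (π x)] at h3
        have hAx : A s (P s x) + B s (π x) = x := congrArg Prod.fst h3
        have hCx : C s (P s x) + D s (π x) = 0 := congrArg Prod.snd h3
        have hC : C s (P s x) = -(D s (π x)) := eq_neg_of_add_eq_zero_left hCx
        have h7 : e (D s (π x)) = M s (π x) := rfl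
        have hterm : (f s)⁻¹ • (R s (P s x)) = B s (π x) := by
          have hq : R s (P s x) = -(B s (adjC s (e (C s (P s x))))) := by
            rw [hRdef]
            simp only [ContinuousLinearMap.neg_apply, ContinuousLinearMap.coe_comp',
              Function.comp_apply, ContinuousLinearEquiv.coe_coe]
          have h8 : adjC s (e (C s (P s x))) = -(f s • π x) := by
            rw [hC, map_neg, map_neg, h7, hadjM s (π x)]
          rw [hq, h8, map_neg, map_smul, neg_neg, smul_smul, inv_mul_cancel₀ hf, one_smul]
        rw [ContinuousLinearMap.add_apply, ContinuousLinearMap.smul_apply, hterm, hAx]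
    refine ⟨V, hVopen, hs₁V, hVU, hVconn, f, A, R, hfan, hAan, hRan, ?_, ?_, ?_⟩
    · -- finite rank
      intro s hs
      have hRK : LinearMap.range (R s : F →ₗ[ℂ] E)
          ≤ LinearMap.range ((B s : ↥N →ₗ[ℂ] E)) := by
        rintro v ⟨u, rfl⟩
        refine ⟨-((adjC s).comp (((e : ↥F₁ →L[ℂ] ↥N)).comp (C s)) u), ?_⟩
        rw [hRdef]
        simp
      exact Submodule.finiteDimensional_of_le hRK
    · -- bijectivity iff
      intro s hs
      constructor
      · intro hPb
        have hDb := key1 s hs hPb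
        have hMb : Function.Bijective (M s) := by
          have hcomp : (M s : ↥N → ↥N) = (e : ↥F₁ → ↥N) ∘ (D s : ↥N → ↥F₁) := rfl
          rw [hcomp]
          exact e.bijective.comp hDb
        have hMb' : Function.Bijective ((M s : ↥N →ₗ[ℂ] ↥N) : ↥N → ↥N) := hMb
        have hunit : IsUnit (LinearMap.det (M s : ↥N →ₗ[ℂ] ↥N)) :=
          (LinearEquiv.ofBijective _ hMb').isUnit_det'
        have hdet : f s = LinearMap.det (M s : ↥N →ₗ[ℂ] ↥N) := LinearMap.det_toMatrix b _
        rw [hdet]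
        exact hunit.ne_zero
      · intro hf
        obtain ⟨hg1, hg2⟩ := hgoal s hs hf
        constructor
        · intro a₁ a₂ hab
          have ha := hg2 a₁
          rw [hab, hg2 a₂] at ha
          exact ha.symm
        · intro z
          exact ⟨(A s + (f s)⁻¹ • R s) z, hg1 z⟩
    · intro s hs hf
      obtain ⟨hg1, hg2⟩ := hgoal s hs hf
      constructor
      · ext z
        simpa using hg1 z
      · ext x
        simpa using hg2 x

end AFT2


/-- Multivariable analytic Fredholm theorem, part II (local structure of the inverse).
With `P : U → L(E, F)` an analytic family of Fredholm operators on a nonempty connected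
open `U ⊆ ℂⁿ`, invertible at some `s₀ ∈ U`, and `S` the non-invertibility set: for every
`s₁ ∈ U` there are an open neighborhood `V ⊆ U`, a holomorphic `f : V → ℂ` not
identically zero with `S ∩ V = f⁻¹(0)`, and analytic families `H, R : V → L(F, E)` with
`R(s)` of finite rank, such that `H(s) + f(s)⁻¹·R(s)` is a two-sided inverse of `P(s)`
whenever `f(s) ≠ 0`. -/
theorem stmt7 {E F : Type*}
    [NormedAddCommGroup E] [NormedSpace ℂ E] [CompleteSpace E]
    [NormedAddCommGroup F] [NormedSpace ℂ F] [CompleteSpace F]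
    {n : ℕ} (hn : 1 ≤ n)
    (U : Set (Fin n → ℂ)) (hUopen : IsOpen U) (hUne : U.Nonempty)
    (hUconn : IsConnected U)
    (P : (Fin n → ℂ) → (E →L[ℂ] F)) (hP : AnalyticOnNhd ℂ P U)
    (hFred : ∀ s ∈ U, FiniteDimensional ℂ (LinearMap.ker (P s : E →ₗ[ℂ] F)) ∧
        IsClosed ((LinearMap.range (P s : E →ₗ[ℂ] F) : Submodule ℂ F) : Set F) ∧
        FiniteDimensional ℂ (F ⧸ LinearMap.range (P s : E →ₗ[ℂ] F)))
    (s₀ : Fin n → ℂ) (hs₀ : s₀ ∈ U) (hbij : Function.Bijective (P s₀)) :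
    ∀ s₁ ∈ U, ∃ V : Set (Fin n → ℂ), IsOpen V ∧ s₁ ∈ V ∧ V ⊆ U ∧
      ∃ f : (Fin n → ℂ) → ℂ, AnalyticOnNhd ℂ f V ∧ (∃ s ∈ V, f s ≠ 0) ∧
        {s ∈ U | ¬ Function.Bijective (P s)} ∩ V = {s ∈ V | f s = 0} ∧
        ∃ H R : (Fin n → ℂ) → (F →L[ℂ] E),
          AnalyticOnNhd ℂ H V ∧ AnalyticOnNhd ℂ R V ∧
          (∀ s ∈ V, FiniteDimensional ℂ (LinearMap.range (R s : F →ₗ[ℂ] E))) ∧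
          (∀ s ∈ V, f s ≠ 0 →
            (P s).comp (H s + (f s)⁻¹ • R s) = ContinuousLinearMap.id ℂ F ∧
            (H s + (f s)⁻¹ • R s).comp (P s) = ContinuousLinearMap.id ℂ E) := by
  classical
  intro s₁ hs₁U
  set W : Set (Fin n → ℂ) := {s | ∃ Vs : Set (Fin n → ℂ), IsOpen Vs ∧ s ∈ Vs ∧ Vs ⊆ U ∧
    ∀ t ∈ Vs, ¬ Function.Bijective (P t)} with hWdef
  have hWU : W ⊆ U := by rintro s ⟨Vs, _, hsVs, hVsU, _⟩; exact hVsU hsVs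
  have hWopen : IsOpen W := by
    rw [isOpen_iff_forall_mem_open]
    rintro s ⟨Vs, hVso, hsVs, hVsU, hnb⟩
    exact ⟨Vs, fun t ht => ⟨Vs, hVso, ht, hVsU, hnb⟩, hVso, hsVs⟩
  have hclosed : ∀ t ∈ U, t ∈ closure W → t ∈ W := by
    intro t htU htc
    obtain ⟨V, hVo, htV, hVU, hVconn, f, H, R, hfan, hHan, hRan, hRfin, hbijiff, hinv⟩ :=
      AFT2.local_struct hUopen hP htU (hFred t htU).1 (hFred t htU).2.2
    obtain ⟨u, huV, huW⟩ := mem_closure_iff.1 htc V hVo htV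
    obtain ⟨Vu, hVuo, huVu, hVuU, hVunb⟩ := huW
    have hev : f =ᶠ[nhds u] 0 := by
      have hm : V ∩ Vu ∈ nhds u := Filter.inter_mem (hVo.mem_nhds huV) (hVuo.mem_nhds huVu)
      filter_upwards [hm] with y hy
      by_contra hfy
      exact (hVunb y hy.2) ((hbijiff y hy.1).2 hfy)
    have hall : Set.EqOn f 0 V :=
      hfan.eqOn_zero_of_preconnected_of_eventuallyEq_zero hVconn huV hev
    exact ⟨V, hVo, htV, hVU, fun y hy hb => ((hbijiff y hy).1 hb) (hall hy)⟩
  have hWempty : W = ∅ := by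
    by_contra hne
    obtain ⟨t, ht⟩ := Set.nonempty_iff_ne_empty.2 hne
    have hs₀nc : s₀ ∉ closure W := by
      intro hc
      obtain ⟨Vs, _, hsVs, _, hnb⟩ := hclosed s₀ hs₀ hc
      exact hnb s₀ hsVs hbij
    obtain ⟨x, hxU, hx⟩ := hUconn.isPreconnected W (closure W)ᶜ hWopen
      isClosed_closure.isOpen_compl
      (fun s hsU => by
        by_cases h : s ∈ closure W
        · exact Set.mem_union_left _ (hclosed s hsU h)
        · exact Set.mem_union_right _ h)
      ⟨t, hWU ht, ht⟩ ⟨s₀, hs₀, hs₀nc⟩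
    exact hx.2 (subset_closure hx.1)
  obtain ⟨V, hVo, hs₁V, hVU, hVconn, f, H, R, hfan, hHan, hRan, hRfin, hbijiff, hinv⟩ :=
    AFT2.local_struct hUopen hP hs₁U (hFred s₁ hs₁U).1 (hFred s₁ hs₁U).2.2
  refine ⟨V, hVo, hs₁V, hVU, f, hfan, ?_, ?_, H, R, hHan, hRan, hRfin, hinv⟩
  · by_contra hnone
    push_neg at hnone
    have hmem : s₁ ∈ W :=
      ⟨V, hVo, hs₁V, hVU, fun t ht hb => ((hbijiff t ht).1 hb) (hnone t ht)⟩
    rw [hWempty] at hmem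
    exact hmem
  · ext s
    simp only [Set.mem_inter_iff, Set.mem_setOf_eq]
    constructor
    · rintro ⟨⟨hsU, hnb⟩, hsV⟩
      refine ⟨hsV, ?_⟩
      by_contra hf0
      exact hnb ((hbijiff s hsV).2 hf0)
    · rintro ⟨hsV, hf0⟩
      exact ⟨⟨hVU hsV, fun hb => ((hbijiff s hsV).1 hb) hf0⟩, hsV⟩
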